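/- Let f : S¹ → S¹ be the map z ↦ z^p with p > 0. Then TC₂(f) = 1, independently of the degree p. -/

import Mathlib

open Set unitInterval

section Defs

variable {X : Type*} {Y : Type*} [TopologicalSpace X] [TopologicalSpace Y]

/-- The restriction of `f` to `V` is null-homotopic. -/
def NullhomotopicOn (f : X → Y) (V : Set X) : Prop :=
  ∃ (H : C(unitInterval × ↥V, Y)) (y : Y),
    (∀ x : ↥V, H (1, x) = f x) ∧ (∀ x : ↥V, H (0, x) = y)

/-- The restriction of `f` to `V` is homotopic to a map with values in `A`. -/
def DeformsIntoOn (f : X → Y) (V : Set X) (A : Set Y) : Prop :=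
  ∃ H : C(unitInterval × ↥V, Y),
    (∀ x : ↥V, H (1, x) = f x) ∧ (∀ x : ↥V, H (0, x) ∈ A)

/-- There is a homotopy of pairs `(V × I, (V ∩ A) × I) → (Y, B)` ending at `f|_V`
and starting at a map into `B`. -/
def RelPairDeform (f : X → Y) (V A : Set X) (B : Set Y) : Prop :=
  ∃ H : C(unitInterval × ↥V, Y),
    (∀ x : ↥V, H (1, x) = f x) ∧ (∀ x : ↥V, H (0, x) ∈ B) ∧
    (∀ (t : unitInterval) (x : ↥V), (x : X) ∈ A → H (t, x) ∈ B)

/-- `relcat f A B ≤ n` : covering by `n+1` open sets as in the definition of the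
relative category of a map of pairs `f : (X,A) → (Y,B)`. -/
def relcatLE (f : X → Y) (A : Set X) (B : Set Y) (n : ℕ) : Prop :=
  ∃ V : Fin (n + 1) → Set X, (∀ i, IsOpen (V i)) ∧ (⋃ i, V i) = Set.univ ∧
    A ⊆ V 0 ∧ (∀ i, i ≠ 0 → NullhomotopicOn f (V i)) ∧ RelPairDeform f (V 0) A B

/-- The relative category of a map of pairs `f : (X,A) → (Y,B)` (`⊤` if none exists). -/
noncomputable def relcat (f : X → Y) (A : Set X) (B : Set Y) : ℕ∞ :=
  sInf {n : ℕ∞ | ∃ m : ℕ, n = (m : ℕ∞) ∧ relcatLE f A B m}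

/-- `qscat f A ≤ n` : covering by `n+1` open sets on each of which `f` deforms into `A`. -/
def qscatLE (f : X → Y) (A : Set Y) (n : ℕ) : Prop :=
  ∃ V : Fin (n + 1) → Set X, (∀ i, IsOpen (V i)) ∧ (⋃ i, V i) = Set.univ ∧
    ∀ i, DeformsIntoOn f (V i) A

/-- The quasi-strong LS category of a map of pairs `f : (B,C) → (X,A)`. -/
noncomputable def qscat (f : X → Y) (A : Set Y) : ℕ∞ :=
  sInf {n : ℕ∞ | ∃ m : ℕ, n = (m : ℕ∞) ∧ qscatLE f A m}

/-- The restriction of `f : (X,C) → (Y,A)` to `(V, V ∩ C)` is strongly relatively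
inessential. -/
def StronglyRelInessentialOn (f : X → Y) (V C : Set X) (A : Set Y) : Prop :=
  ∃ H : C(unitInterval × ↥V, Y),
    (∀ x : ↥V, H (1, x) = f x) ∧ (∀ x : ↥V, H (0, x) ∈ A) ∧
    (∀ (t : unitInterval) (x : ↥V), (x : X) ∈ C → H (t, x) = f x)

/-- `srelcat f C A ≤ n`. -/
def srelcatLE (f : X → Y) (C : Set X) (A : Set Y) (n : ℕ) : Prop :=
  ∃ V : Fin (n + 1) → Set X, (∀ i, IsOpen (V i)) ∧ (⋃ i, V i) = Set.univ ∧
    ∀ i, StronglyRelInessentialOn f (V i) C A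

/-- The strong relative LS category of a map of pairs `f : (B,C) → (X,A)`. -/
noncomputable def srelcat (f : X → Y) (C : Set X) (A : Set Y) : ℕ∞ :=
  sInf {n : ℕ∞ | ∃ m : ℕ, n = (m : ℕ∞) ∧ srelcatLE f C A m}

/-- `catMap f ≤ n` : covering by `n+1` open sets on each of which `f` is null-homotopic. -/
def catMapLE (f : X → Y) (n : ℕ) : Prop :=
  ∃ V : Fin (n + 1) → Set X, (∀ i, IsOpen (V i)) ∧ (⋃ i, V i) = Set.univ ∧
    ∀ i, NullhomotopicOn f (V i)

/-- The LS category of a map. -/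
noncomputable def catMap (f : X → Y) : ℕ∞ :=
  sInf {n : ℕ∞ | ∃ m : ℕ, n = (m : ℕ∞) ∧ catMapLE f m}

end Defs

/-- The `n`-th (higher) topological complexity of a map `f : X → Y`:
`qscat` of the induced map of pairs `(Xⁿ, Δₙ(X)) → (Yⁿ, Δₙ(Y))`. -/
noncomputable def TCmap (n : ℕ) {X Y : Type*} [TopologicalSpace X] [TopologicalSpace Y]
    (f : X → Y) : ℕ∞ :=
  qscat (fun x : Fin n → X => fun i => f (x i)) {y : Fin n → Y | ∀ i j, y i = y j}


section Helpers

open Complex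


lemma circle_exp_pi_coe : ((Circle.exp Real.pi : Circle) : ℂ) = -1 := by
  rw [Circle.coe_exp]
  exact Complex.exp_pi_mul_I

lemma circle_slitPlane {z : Circle} (hz : z ≠ Circle.exp Real.pi) : (z : ℂ) ∈ Complex.slitPlane := by
  by_contra h
  rw [Complex.mem_slitPlane_iff] at h
  push_neg at h
  apply hz
  have habs := Circle.norm_coe z
  have him : (z:ℂ).im = 0 := h.2
  have hsq := Complex.sq_norm (z:ℂ)
  rw [habs, Complex.normSq_apply, him] at hsq
  have hre : (z:ℂ).re = -1 := by nlinarith [h.1]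
  apply Circle.ext
  rw [circle_exp_pi_coe]
  apply Complex.ext <;> simp [hre, him]

lemma circle_exp_pi_ne_one : Circle.exp Real.pi ≠ 1 := by
  intro h
  obtain ⟨n, hn⟩ := Circle.exp_eq_one.mp h
  have h2 : ((2*n : ℤ) : ℝ) = 1 := by push_cast; nlinarith [Real.pi_ne_zero, Real.pi_pos]
  have : (2*n : ℤ) = 1 := by exact_mod_cast h2
  omega

-- exp of natural multiple
lemma circle_exp_nat_mul (n : ℕ) (x : ℝ) : Circle.exp (n * x) = (Circle.exp x) ^ n := by
  induction n with
  | zero => simp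
  | succ k ih =>
    rw [pow_succ, ← ih, ← Circle.exp_add]
    congr 1
    push_cast
    ring

-- a circle-valued quotient at distance < 2 is not exp π
lemma circle_div_ne_expPi {a b : Circle} (h : dist a b < 2) : a / b ≠ Circle.exp Real.pi := by
  intro hab
  have : (a:ℂ) = -(b:ℂ) := by
    have := congrArg (fun z : Circle => ((z * b : Circle) : ℂ)) hab
    simpa [div_mul_cancel₀, circle_exp_pi_coe] using this
  change dist (a:ℂ) (b:ℂ) < 2 at h
  rw [Complex.dist_eq, this] at h
  have : ‖-(b:ℂ) - b‖ = 2 := by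
    have : -(b:ℂ) - b = -(2 * b) := by ring
    rw [this, norm_neg, norm_mul]
    simp [Circle.norm_coe]
  linarith


-- a continuous function whose exp is constantly 1 on Icc 0 1 takes equal values at members
lemma const_of_exp_one {c : ℝ → ℝ} (hc : ContinuousOn c (Icc (0:ℝ) 1))
    (h : ∀ s ∈ Icc (0:ℝ) 1, Circle.exp (c s) = 1) {a b : ℝ}
    (ha : a ∈ Icc (0:ℝ) 1) (hb : b ∈ Icc (0:ℝ) 1) : c a = c b := by
  have hπ := Real.pi_pos
  -- helper: can't have c a < c b
  have key : ∀ x ∈ Icc (0:ℝ) 1, ∀ y ∈ Icc (0:ℝ) 1, ¬ c x < c y := by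
    intro x hx y hy hlt
    obtain ⟨m, hm⟩ := Circle.exp_eq_one.mp (h x hx)
    obtain ⟨m', hm'⟩ := Circle.exp_eq_one.mp (h y hy)
    have hmm : m < m' := by
      by_contra hcon
      push_neg at hcon
      have : (m':ℝ) ≤ m := by exact_mod_cast hcon
      nlinarith
    have hmm1 : (m:ℝ) + 1 ≤ m' := by exact_mod_cast hmm
    set r : ℝ := m * (2*Real.pi) + Real.pi with hr
    have h1 : c x < r := by rw [hm]; nlinarith
    have h2 : r < c y := by rw [hm']; nlinarith
    have himg : IsPreconnected (c '' Icc (0:ℝ) 1) :=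
      (isPreconnected_Icc).image c hc
    have hsub := himg.ordConnected.out (mem_image_of_mem c hx) (mem_image_of_mem c hy)
    have hrmem : r ∈ c '' Icc (0:ℝ) 1 := hsub ⟨le_of_lt h1, le_of_lt h2⟩
    obtain ⟨s, hs, hcs⟩ := hrmem
    obtain ⟨k, hk⟩ := Circle.exp_eq_one.mp (h s hs)
    rw [hcs] at hk
    have : ((2*k - 2*m : ℤ):ℝ) = 1 := by push_cast; nlinarith
    have : (2*k - 2*m : ℤ) = 1 := by exact_mod_cast this
    omega
  rcases lt_trichotomy (c a) (c b) with h1 | h1 | h1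
  · exact absurd h1 (key a ha b hb)
  · exact h1
  · exact absurd h1 (key b hb a ha)

/-- Lifting a continuous map from the square to the circle. -/
lemma exists_lift (L : C(unitInterval × unitInterval, Circle)) (hL0 : L (0,0) = 1) :
    ∃ ℓ : unitInterval × unitInterval → ℝ, Continuous ℓ ∧ ∀ x, Circle.exp (ℓ x) = L x := by
  have hu : UniformContinuous L := CompactSpace.uniformContinuous_of_continuous L.continuous
  obtain ⟨δ, hδpos, hδ⟩ := Metric.uniformContinuous_iff.mp hu 2 two_pos
  obtain ⟨n, hn⟩ := exists_nat_one_div_lt hδpos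
  set N : ℕ := n + 1 with hNdef
  have hNpos : (0:ℝ) < N := by positivity
  have hn' : 1 / (N:ℝ) < δ := by rw [hNdef]; push_cast; exact_mod_cast hn
  set pr : ℝ → unitInterval := projIcc 0 1 zero_le_one with hpr
  set m : ℕ → unitInterval × unitInterval → unitInterval × unitInterval :=
    fun k x => (pr ((k/N) * (x.1:ℝ)), pr ((k/N) * (x.2:ℝ))) with hm
  have hmcont : ∀ k, Continuous (m k) := by
    intro k
    exact (continuous_projIcc.comp
        (continuous_const.mul (continuous_subtype_val.comp continuous_fst))).prodMk
      (continuous_projIcc.comp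
        (continuous_const.mul (continuous_subtype_val.comp continuous_snd)))
  set step : unitInterval × unitInterval → ℕ → Circle :=
    fun x k => L (m (k+1) x) / L (m k x) with hstep
  have hdist : ∀ x k, dist (L (m (k+1) x)) (L (m k x)) < 2 := by
    intro x k
    apply hδ
    rw [Prod.dist_eq]
    have key : ∀ (t : unitInterval) (k : ℕ),
        dist (pr (((k:ℝ)+1)/N * (t:ℝ))) (pr ((k/N) * (t:ℝ))) < δ := by
      intro t k
      calc dist (pr (((k:ℝ)+1)/N * (t:ℝ))) (pr ((k/N) * (t:ℝ)))
          ≤ dist (((k:ℝ)+1)/N * (t:ℝ)) ((k/N) * (t:ℝ)) := by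
            simpa using (LipschitzWith.projIcc (zero_le_one)).dist_le_mul _ _
        _ = (t:ℝ) / N := by
            rw [Real.dist_eq]
            have he : ((k:ℝ)+1)/N * (t:ℝ) - (k/N) * (t:ℝ) = (t:ℝ)/N := by field_simp; ring
            rw [he, _root_.abs_of_nonneg (div_nonneg t.2.1 hNpos.le)]
        _ ≤ 1 / N := by
            gcongr
            exact t.2.2
        _ < δ := hn'
    have k1 : ((k+1 : ℕ):ℝ) = (k:ℝ)+1 := by push_cast; ring
    apply max_lt
    · simpa [hm, k1] using key x.1 k
    · simpa [hm, k1] using key x.2 k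
  have hne : ∀ x k, step x k ≠ Circle.exp Real.pi := fun x k => circle_div_ne_expPi (hdist x k)
  have hm0 : ∀ x, m 0 x = (0, 0) := by
    intro x
    have h0 : ∀ t : unitInterval, pr (((0:ℕ):ℝ)/N * (t:ℝ)) = 0 := by
      intro t
      simp only [Nat.cast_zero, zero_div, zero_mul, hpr]
      exact projIcc_left _
    exact Prod.ext (h0 x.1) (h0 x.2)
  have hmN : ∀ x, m N x = x := by
    intro x
    have hN : ∀ t : unitInterval, pr (((N:ℕ):ℝ)/N * (t:ℝ)) = t := by
      intro t
      rw [div_self hNpos.ne', one_mul, hpr, projIcc_of_mem zero_le_one t.2]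
    exact Prod.ext (hN x.1) (hN x.2)
  refine ⟨fun x => ∑ k ∈ Finset.range N, Complex.arg (step x k), ?_, ?_⟩
  · apply continuous_finset_sum
    intro k _
    rw [continuous_iff_continuousAt]
    intro x
    have hinner : Continuous fun a : unitInterval × unitInterval => ((step a k : Circle) : ℂ) :=
      continuous_subtype_val.comp
        ((L.continuous.comp (hmcont (k+1))).div' (L.continuous.comp (hmcont k)))
    show ContinuousAt (Complex.arg ∘ fun a : unitInterval × unitInterval => ((step a k : Circle) : ℂ)) x
    exact ContinuousAt.comp (Complex.continuousAt_arg (circle_slitPlane (hne x k)))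
      hinner.continuousAt
  · intro x
    have key : ∀ j, j ≤ N → Circle.exp (∑ k ∈ Finset.range j, Complex.arg (step x k))
        = L (m j x) / L (m 0 x) := by
      intro j hj
      induction j with
      | zero => simp
      | succ i ih =>
        rw [Finset.sum_range_succ, Circle.exp_add, ih (Nat.le_of_succ_le hj), Circle.exp_arg,
          hstep]
        rw [div_mul_div_comm, mul_comm (L (m i x)), mul_div_mul_right_eq_div]
    have := key N le_rfl
    rw [hmN x, hm0 x, hL0, div_one] at this
    exact this

/-- On a set with a continuous "angle between the coordinates", `f` deforms into the diagonal. -/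
lemma deforms_of_angle (p : ℕ) (W : Set (Fin 2 → Circle)) (θ : ↥W → ℝ) (hθ : Continuous θ)
    (hexp : ∀ x : ↥W, Circle.exp (θ x) = (x : Fin 2 → Circle) 0 / (x : Fin 2 → Circle) 1) :
    ∃ H : C(unitInterval × ↥W, Fin 2 → Circle),
      (∀ x, H (1, x) = (fun x : Fin 2 → Circle => fun i => (x i)^p) x) ∧
      (∀ x, H (0, x) ∈ {y : Fin 2 → Circle | ∀ i j, y i = y j}) := by
  have hcont : Continuous fun q : unitInterval × ↥W =>
      (fun i : Fin 2 => ((q.2 : Fin 2 → Circle) i *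
        Circle.exp ((1 - (q.1:ℝ)) * θ q.2 * (i:ℕ)))^p) := by
    apply continuous_pi
    intro i
    apply Continuous.pow
    apply Continuous.mul
    · exact (continuous_apply i).comp (continuous_subtype_val.comp continuous_snd)
    · apply Circle.exp.continuous.comp
      have : Continuous fun q : unitInterval × ↥W => (1 - (q.1:ℝ)) :=
        continuous_const.sub (continuous_subtype_val.comp continuous_fst)
      exact (this.mul (hθ.comp continuous_snd)).mul continuous_const
  refine ⟨⟨_, hcont⟩, ?_, ?_⟩
  · intro x
    funext i
    show ((x : Fin 2 → Circle) i * Circle.exp ((1 - ((1:unitInterval):ℝ)) * θ x * (i:ℕ)))^p = _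
    norm_num
  · intro x
    have key : ∀ i : Fin 2, ((x : Fin 2 → Circle) i *
        Circle.exp ((1 - ((0:unitInterval):ℝ)) * θ x * (i:ℕ)))^p = ((x : Fin 2 → Circle) 0)^p := by
      intro i
      match i with
      | 0 => norm_num
      | 1 =>
        have h0 : ((0:unitInterval):ℝ) = 0 := rfl
        have : (1 - ((0:unitInterval):ℝ)) * θ x * ((1 : Fin 2):ℕ) = θ x := by
          rw [h0]; norm_num
        rw [this, hexp]
        congr 1
        exact mul_div_cancel _ _
    intro i j
    show ((x : Fin 2 → Circle) i * _)^p = ((x : Fin 2 → Circle) j * _)^p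
    rw [key i, key j]

lemma upper (p : ℕ) : qscatLE (fun x : Fin 2 → Circle => fun i => (x i)^p)
    {y : Fin 2 → Circle | ∀ i j, y i = y j} 1 := by
  set e := Circle.exp Real.pi with hedef
  refine ⟨![{x | x 0 / x 1 ≠ e}, {x | x 0 ≠ x 1}], ?_, ?_, ?_⟩
  · intro i
    match i with
    | 0 =>
      show IsOpen {x : Fin 2 → Circle | x 0 / x 1 ≠ e}
      exact isOpen_compl_singleton.preimage ((continuous_apply 0).div' (continuous_apply 1))
    | 1 =>
      show IsOpen {x : Fin 2 → Circle | x 0 ≠ x 1}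
      exact (isClosed_eq (continuous_apply 0) (continuous_apply 1)).isOpen_compl
  · apply eq_univ_iff_forall.mpr
    intro x
    rw [mem_iUnion]
    by_cases hx : x 0 / x 1 = e
    · refine ⟨1, ?_⟩
      show x 0 ≠ x 1
      intro hne
      rw [hne, div_self'] at hx
      exact circle_exp_pi_ne_one hx.symm
    · exact ⟨0, hx⟩
  · intro i
    match i with
    | 0 =>
      apply deforms_of_angle p _ (fun x => Complex.arg ((((x : Fin 2 → Circle) 0 /
          (x : Fin 2 → Circle) 1 : Circle)) : ℂ))
      · rw [continuous_iff_continuousAt]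
        intro x
        have hx : (x : Fin 2 → Circle) 0 / (x : Fin 2 → Circle) 1 ≠ e := x.2
        have hinner : Continuous fun a : ↥{x : Fin 2 → Circle | x 0 / x 1 ≠ e} =>
            ((((a : Fin 2 → Circle) 0 / (a : Fin 2 → Circle) 1 : Circle)) : ℂ) :=
          continuous_subtype_val.comp
            (((continuous_apply 0).comp continuous_subtype_val).div'
              ((continuous_apply 1).comp continuous_subtype_val))
        show ContinuousAt (Complex.arg ∘ fun a : ↥{x : Fin 2 → Circle | x 0 / x 1 ≠ e} =>
          ((((a : Fin 2 → Circle) 0 / (a : Fin 2 → Circle) 1 : Circle)) : ℂ)) x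
        exact ContinuousAt.comp (Complex.continuousAt_arg (circle_slitPlane hx))
          hinner.continuousAt
      · intro x
        exact Circle.exp_arg _
    | 1 =>
      apply deforms_of_angle p _ (fun x => Complex.arg ((((x : Fin 2 → Circle) 0 /
          (x : Fin 2 → Circle) 1 * e : Circle)) : ℂ) + Real.pi)
      · rw [continuous_iff_continuousAt]
        intro x
        have hx : (x : Fin 2 → Circle) 0 / (x : Fin 2 → Circle) 1 * e ≠ e := by
          intro h
          have h1 := mul_eq_right.mp h
          have h2 := div_eq_one.mp h1
          exact x.2 h2
        have hinner : Continuous fun a : ↥{x : Fin 2 → Circle | x 0 ≠ x 1} =>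
            ((((a : Fin 2 → Circle) 0 / (a : Fin 2 → Circle) 1 * e : Circle)) : ℂ) :=
          continuous_subtype_val.comp
            ((((continuous_apply 0).comp continuous_subtype_val).div'
              ((continuous_apply 1).comp continuous_subtype_val)).mul continuous_const)
        apply ContinuousAt.add ?_ continuousAt_const
        show ContinuousAt (Complex.arg ∘ fun a : ↥{x : Fin 2 → Circle | x 0 ≠ x 1} =>
          ((((a : Fin 2 → Circle) 0 / (a : Fin 2 → Circle) 1 * e : Circle)) : ℂ)) x
        exact ContinuousAt.comp (Complex.continuousAt_arg (circle_slitPlane hx))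
          hinner.continuousAt
      · intro x
        rw [Circle.exp_add, Circle.exp_arg]
        have : ((x : Fin 2 → Circle) 0 / (x : Fin 2 → Circle) 1 * e) * e
            = (x : Fin 2 → Circle) 0 / (x : Fin 2 → Circle) 1 * (e * e) := mul_assoc _ _ _
        rw [this, hedef, ← Circle.exp_add]
        have h2 : Real.pi + Real.pi = 2 * Real.pi := by ring
        rw [h2, Circle.exp_two_pi, mul_one]

lemma lower (p : ℕ) (hp : 0 < p) :
    ¬ qscatLE (fun x : Fin 2 → Circle => fun i => (x i)^p)
      {y : Fin 2 → Circle | ∀ i j, y i = y j} 0 := by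
  rintro ⟨V, hVopen, hVcover, hdef⟩
  have hmem : ∀ x, x ∈ V 0 := by
    intro x
    have hx : x ∈ ⋃ i, V i := hVcover.symm ▸ mem_univ x
    obtain ⟨i, hi⟩ := mem_iUnion.mp hx
    fin_cases i
    exact hi
  obtain ⟨H, h1, h0⟩ := hdef 0
  set c : unitInterval → Fin 2 → Circle := fun s i =>
    Fin.cases (Circle.exp (2 * Real.pi * (s:ℝ))) (fun _ => 1) i with hcdef
  have hc : Continuous c := by
    apply continuous_pi
    intro i
    refine Fin.cases ?_ ?_ i
    · simp only [hcdef, Fin.cases_zero]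
      exact Circle.exp.continuous.comp (continuous_const.mul continuous_subtype_val)
    · intro j
      simp only [hcdef, Fin.cases_succ]
      exact continuous_const
  have hΦ : Continuous fun x : unitInterval × unitInterval =>
      ((x.1, ⟨c x.2, hmem (c x.2)⟩) : unitInterval × ↥(V 0)) :=
    continuous_fst.prodMk ((hc.comp continuous_snd).subtype_mk _)
  set L : C(unitInterval × unitInterval, Circle) :=
    ⟨fun x => H (x.1, ⟨c x.2, hmem (c x.2)⟩) 0 / H (x.1, ⟨c x.2, hmem (c x.2)⟩) 1,
      ((continuous_apply 0).comp (H.continuous.comp hΦ)).div'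
        ((continuous_apply 1).comp (H.continuous.comp hΦ))⟩ with hLdef
  have hL0 : ∀ s, L (0, s) = 1 := by
    intro s
    have := h0 ⟨c s, hmem (c s)⟩
    exact div_eq_one.mpr (this 0 1)
  have hL1 : ∀ s : unitInterval, L (1, s) = Circle.exp ((p:ℝ) * (2 * Real.pi * (s:ℝ))) := by
    intro s
    have := h1 ⟨c s, hmem (c s)⟩
    have e0 : H (1, ⟨c s, hmem (c s)⟩) 0 = (c s 0)^p := by rw [this]
    have e1 : H (1, ⟨c s, hmem (c s)⟩) 1 = (c s 1)^p := by rw [this]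
    have hc0 : c s 0 = Circle.exp (2 * Real.pi * (s:ℝ)) := rfl
    have hc1 : c s 1 = 1 := rfl
    show H (1, ⟨c s, hmem (c s)⟩) 0 / H (1, ⟨c s, hmem (c s)⟩) 1 = _
    rw [e0, e1, hc0, hc1, one_pow, div_one, circle_exp_nat_mul]
  have hcper : c 0 = c 1 := by
    funext i
    refine Fin.cases ?_ ?_ i
    · show Circle.exp (2 * Real.pi * ((0:unitInterval):ℝ)) =
        Circle.exp (2 * Real.pi * ((1:unitInterval):ℝ))
      norm_num
    · intro j; rfl
  have hLper : ∀ t : unitInterval, L (t, 0) = L (t, 1) := by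
    intro t
    show H (t, ⟨c 0, _⟩) 0 / H (t, ⟨c 0, _⟩) 1 = H (t, ⟨c 1, _⟩) 0 / H (t, ⟨c 1, _⟩) 1
    congr 2 <;> rw [hcper]
  obtain ⟨ℓ, hℓcont, hℓ⟩ := exists_lift L (hL0 0)
  set pr : ℝ → unitInterval := projIcc 0 1 zero_le_one with hprdef
  have hprc : Continuous pr := continuous_projIcc
  have pr0 : pr 0 = 0 := by
    apply Subtype.ext
    rw [hprdef, projIcc_of_mem zero_le_one (by norm_num : (0:ℝ) ∈ Icc (0:ℝ) 1)]
    rfl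
  have pr1 : pr 1 = 1 := by
    apply Subtype.ext
    rw [hprdef, projIcc_of_mem zero_le_one (by norm_num : (1:ℝ) ∈ Icc (0:ℝ) 1)]
    rfl
  -- step C : ℓ (0, 0) = ℓ (0, 1)
  have hC : ℓ (0, (0:unitInterval)) = ℓ (0, (1:unitInterval)) := by
    have := const_of_exp_one (c := fun s => ℓ (0, pr s))
      ((hℓcont.comp (continuous_const.prodMk hprc)).continuousOn)
      (fun s _ => by rw [hℓ]; exact hL0 (pr s))
      (left_mem_Icc.mpr zero_le_one) (right_mem_Icc.mpr zero_le_one)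
    simpa only [pr0, pr1] using this
  -- step B : ℓ (1, 0) = ℓ (1, 1)
  have hB : ℓ (1, (0:unitInterval)) = ℓ (1, (1:unitInterval)) := by
    have hBconst := const_of_exp_one (c := fun t => ℓ (pr t, 0) - ℓ (pr t, 1))
      (((hℓcont.comp ((hprc).prodMk continuous_const)).sub
        (hℓcont.comp ((hprc).prodMk continuous_const))).continuousOn)
      (fun t _ => by rw [Circle.exp_sub, hℓ, hℓ, hLper (pr t), div_self'])
      (left_mem_Icc.mpr zero_le_one) (right_mem_Icc.mpr zero_le_one)
    simp only [pr0, pr1] at hBconst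
    have h00 : ℓ (0, (0:unitInterval)) - ℓ (0, (1:unitInterval)) = 0 := by rw [hC]; ring
    rw [h00] at hBconst
    linarith [hBconst]
  -- step A : ℓ (1, 1) - ℓ (1, 0) = 2πp
  have hA : ℓ (1, (1:unitInterval)) - ℓ (1, (0:unitInterval)) = 2 * Real.pi * p := by
    have hAconst := const_of_exp_one (c := fun s => ℓ (1, pr s) - 2 * Real.pi * p * s)
      (((hℓcont.comp (continuous_const.prodMk hprc)).sub (by fun_prop)).continuousOn)
      (fun s hs => by
        rw [Circle.exp_sub, hℓ]
        have hps : ((pr s : ℝ)) = s := by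
          rw [hprdef, projIcc_of_mem zero_le_one hs]
        rw [hL1 (pr s), hps]
        have : (p:ℝ) * (2 * Real.pi * s) = 2 * Real.pi * p * s := by ring
        rw [this, div_self'])
      (left_mem_Icc.mpr zero_le_one) (right_mem_Icc.mpr zero_le_one)
    simp only [pr0, pr1] at hAconst
    nlinarith [hAconst]
  have hπ := Real.pi_pos
  have hppos : (0:ℝ) < p := by exact_mod_cast hp
  rw [hB] at hA
  nlinarith


end Helpers

/-- for `f : S¹ → S¹`, `z ↦ z^p` with `p > 0`, one has `TC₂(f) = 1`,
independently of `p`. -/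
theorem TC2_circle_power (p : ℕ) (hp : 0 < p) :
    TCmap 2 (fun z : Circle => z ^ p) = 1 := by
  have hupper := upper p
  have hlower := lower p hp
  show qscat (fun x : Fin 2 → Circle => fun i => (x i) ^ p)
      {y : Fin 2 → Circle | ∀ i j, y i = y j} = 1
  rw [qscat]
  apply le_antisymm
  · exact sInf_le ⟨1, by norm_cast, hupper⟩
  · apply le_sInf
    rintro b ⟨m, rfl, hm⟩
    cases m with
    | zero => exact absurd hm hlower
    | succ k =>
      exact_mod_cast Nat.one_le_iff_ne_zero.mpr (Nat.succ_ne_zero k)
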